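/- Let G = (V, E) be a finite connected simple graph and suppose V_1, V_2 ⊆ V satisfy: (1) V_1 ∩ V_2 = ∅, and (2) for every u ∈ V_1, every neighbor of u in G lies in V_2 (i.e., N(u) ⊆ V_2). Then rt(G) · |V_2| ≥ ⌊|V_1|/2⌋; in particular rt(G) = Ω(|V_1|/|V_2|). -/

import Mathlib

/-- A routing round on `G`: the swap permutation of a matching of `G`, i.e. an involution
of the vertices that moves vertices only along edges of `G`. -/
def isRound {V : Type*} (G : SimpleGraph V) (σ : Equiv.Perm V) : Prop :=
  σ * σ = 1 ∧ ∀ v : V, σ v ≠ v → G.Adj v (σ v)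

/-- Composition, in order, of a list of round permutations: for `L = [σ₁, …, σₘ]`,
`rComp L = σₘ ∘ ⋯ ∘ σ₁`. -/
def rComp {V : Type*} (L : List (Equiv.Perm V)) : Equiv.Perm V :=
  L.foldl (fun p σ => σ * p) 1

/-- `rt(G, π)`: the minimum number of routing rounds (matchings of `G`) whose swap
permutations, composed in order, realize the permutation `π`. -/
noncomputable def rtP {V : Type*} (G : SimpleGraph V) (π : Equiv.Perm V) : ℕ :=
  sInf {m | ∃ L : List (Equiv.Perm V), L.length = m ∧ (∀ σ ∈ L, isRound G σ) ∧ rComp L = π}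

/-- `rt(G)`: the routing number of `G`, the maximum of `rt(G, π)` over all permutations. -/
noncomputable def rt {V : Type*} [Fintype V] [DecidableEq V] (G : SimpleGraph V) : ℕ :=
  Finset.univ.sup (rtP G)

section Aux

variable {V : Type*} [DecidableEq V]
set_option linter.unusedSectionVars false

lemma foldl_mul_eq (L : List (Equiv.Perm V)) (p : Equiv.Perm V) :
    L.foldl (fun p σ => σ * p) p = rComp L * p := by
  induction L generalizing p with
  | nil => simp [rComp]
  | cons σ T ih =>
    simp only [rComp, List.foldl_cons]
    rw [ih (σ * p), ih (σ * 1), mul_one, mul_assoc]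

lemma rComp_nil : rComp ([] : List (Equiv.Perm V)) = 1 := rfl

lemma rComp_cons (σ : Equiv.Perm V) (T : List (Equiv.Perm V)) :
    rComp (σ :: T) = rComp T * σ := by
  simpa [rComp] using foldl_mul_eq T (σ * 1)

lemma rComp_singleton (σ : Equiv.Perm V) : rComp [σ] = σ := by
  simp [rComp_cons, rComp_nil]

lemma rComp_append (L₁ L₂ : List (Equiv.Perm V)) :
    rComp (L₁ ++ L₂) = rComp L₂ * rComp L₁ := by
  induction L₁ with
  | nil => simp [rComp_nil]
  | cons σ T ih => rw [List.cons_append, rComp_cons, rComp_cons, ih, mul_assoc]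

lemma rComp_fix {L : List (Equiv.Perm V)} {x : V} (h : ∀ σ ∈ L, σ x = x) :
    rComp L x = x := by
  induction L with
  | nil => rfl
  | cons σ T ih =>
    rw [rComp_cons]
    simp only [Equiv.Perm.mul_apply]
    rw [h σ (by simp), ih (fun τ hτ => h τ (by simp [hτ]))]

lemma isRound_swap {G : SimpleGraph V} {a b : V} (h : G.Adj a b) :
    isRound G (Equiv.swap a b) := by
  constructor
  · rw [Equiv.swap_mul_self]
  · intro v hv
    rcases Equiv.swap_apply_ne_self_iff.mp hv with ⟨_, hv'⟩
    rcases hv' with rfl | rfl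
    · rwa [Equiv.swap_apply_left]
    · rw [Equiv.swap_apply_right]; exact h.symm

lemma realize_swap {G : SimpleGraph V} {u v : V} (h : G.Reachable u v) :
    ∃ L : List (Equiv.Perm V), (∀ σ ∈ L, isRound G σ) ∧ rComp L = Equiv.swap u v := by
  obtain ⟨w⟩ := h
  induction w with
  | nil => exact ⟨[], by simp, by rw [Equiv.swap_self, rComp_nil]; rfl⟩
  | @cons u x v hadj p ih =>
    rcases eq_or_ne u v with rfl | huv
    · exact ⟨[], by simp, by rw [Equiv.swap_self, rComp_nil]; rfl⟩
    rcases eq_or_ne x v with rfl | hxv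
    · exact ⟨[Equiv.swap u x], by simpa using isRound_swap hadj, rComp_singleton _⟩
    obtain ⟨L', hL'₁, hL'₂⟩ := ih
    refine ⟨[Equiv.swap u x] ++ L' ++ [Equiv.swap u x], ?_, ?_⟩
    · intro σ hσ
      simp only [List.mem_append, List.mem_singleton] at hσ
      rcases hσ with (rfl | hσ) | rfl
      · exact isRound_swap hadj
      · exact hL'₁ σ hσ
      · exact isRound_swap hadj
    · rw [rComp_append, rComp_append, rComp_singleton, hL'₂]
      have hconj := Equiv.swap_apply_apply (Equiv.swap u x) x v
      rw [Equiv.swap_apply_right, Equiv.swap_apply_of_ne_of_ne huv.symm hxv.symm,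
        Equiv.swap_inv] at hconj
      rw [mul_assoc] at hconj
      exact hconj.symm

lemma realize_rComp {G : SimpleGraph V} (M : List (Equiv.Perm V))
    (h : ∀ τ ∈ M, ∃ L : List (Equiv.Perm V), (∀ σ ∈ L, isRound G σ) ∧ rComp L = τ) :
    ∃ L : List (Equiv.Perm V), (∀ σ ∈ L, isRound G σ) ∧ rComp L = rComp M := by
  induction M with
  | nil => exact ⟨[], by simp, rfl⟩
  | cons τ T ih =>
    obtain ⟨Lτ, hLτ₁, hLτ₂⟩ := h τ (by simp)
    obtain ⟨LT, hLT₁, hLT₂⟩ := ih (fun τ' hτ' => h τ' (by simp [hτ']))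
    refine ⟨Lτ ++ LT, ?_, ?_⟩
    · intro σ hσ
      rcases List.mem_append.mp hσ with hσ | hσ
      · exact hLτ₁ σ hσ
      · exact hLT₁ σ hσ
    · rw [rComp_append, rComp_cons, hLτ₂, hLT₂]

end Aux

/-- Bottleneck lemma: if `V₁` and `V₂` are disjoint vertex sets and every neighbor of every
vertex of `V₁` lies in `V₂`, then `rt(G) * |V₂| ≥ ⌊|V₁| / 2⌋`. -/
theorem bottleneck_lower_bound
    {V : Type*} [Fintype V] [DecidableEq V] (G : SimpleGraph V) (hG : G.Connected)
    (V₁ V₂ : Finset V) (hdisj : Disjoint V₁ V₂)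
    (hN : ∀ u ∈ V₁, ∀ w : V, G.Adj u w → w ∈ V₂) :
    V₁.card / 2 ≤ rt G * V₂.card := by
  set k : ℕ := V₁.card / 2 with hk
  set l : List V := V₁.toList with hl
  have hlen : l.length = V₁.card := Finset.length_toList V₁
  have hnd : l.Nodup := Finset.nodup_toList V₁
  -- the paired vertices
  have hia : ∀ i : Fin k, 2 * i.1 < l.length := by
    intro i; rw [hlen]; have := i.2; omega
  have hib : ∀ i : Fin k, 2 * i.1 + 1 < l.length := by
    intro i; rw [hlen]; have := i.2; omega
  set a : Fin k → V := fun i => l.get ⟨2 * i.1, hia i⟩ with ha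
  set b : Fin k → V := fun i => l.get ⟨2 * i.1 + 1, hib i⟩ with hb
  have hgetinj : ∀ p q : Fin l.length, l.get p = l.get q → p = q :=
    fun p q h => (List.Nodup.get_inj_iff hnd).mp h
  have haV₁ : ∀ i, a i ∈ V₁ := fun i => Finset.mem_toList.mp (List.get_mem l _)
  have hab : ∀ i j : Fin k, a i ≠ b j := by
    intro i j h
    have := hgetinj _ _ h
    simp only [Fin.mk.injEq] at this
    omega
  have haa : ∀ i j : Fin k, a i = a j → i = j := by
    intro i j h
    have := hgetinj _ _ h
    simp only [Fin.mk.injEq] at this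
    exact Fin.ext (by omega)
  have hbb : ∀ i j : Fin k, b i = b j → i = j := by
    intro i j h
    have := hgetinj _ _ h
    simp only [Fin.mk.injEq] at this
    exact Fin.ext (by omega)
  -- the permutation to route
  set π : Equiv.Perm V := rComp ((List.finRange k).map fun i => Equiv.swap (a i) (b i))
    with hπ
  have key : ∀ li : List (Fin k), li.Nodup → ∀ i ∈ li,
      rComp (li.map fun j => Equiv.swap (a j) (b j)) (a i) = b i := by
    intro li
    induction li with
    | nil => intro _ i hi; simp at hi
    | cons j T ih =>
      intro hnodup i hi
      rw [List.map_cons, rComp_cons]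
      simp only [Equiv.Perm.mul_apply]
      rcases List.mem_cons.mp hi with rfl | hiT
      · rw [Equiv.swap_apply_left]
        refine rComp_fix ?_
        intro σ hσ
        obtain ⟨j', hj', rfl⟩ := List.mem_map.mp hσ
        have hj'i : j' ≠ i := by
          rintro rfl
          exact (List.nodup_cons.mp hnodup).1 hj'
        refine Equiv.swap_apply_of_ne_of_ne ?_ ?_
        · exact fun h => hab j' i h.symm
        · exact fun h => hj'i (hbb j' i h.symm)
      · have hij : i ≠ j := by
          rintro rfl
          exact (List.nodup_cons.mp hnodup).1 hiT
        rw [Equiv.swap_apply_of_ne_of_ne (fun h => hij (haa i j h)) (hab i j)]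
        exact ih (List.nodup_cons.mp hnodup).2 i hiT
  have hπa : ∀ i : Fin k, π (a i) = b i := by
    intro i
    exact key (List.finRange k) (List.nodup_finRange k) i (List.mem_finRange i)
  -- realizability of π
  obtain ⟨L, hL₁, hL₂⟩ := realize_rComp (G := G)
      ((List.finRange k).map fun i => Equiv.swap (a i) (b i)) (by
    intro τ hτ
    obtain ⟨i, _, rfl⟩ := List.mem_map.mp hτ
    exact realize_swap (hG.preconnected (a i) (b i)))
  have hSne : (rtP G π) ∈ {m | ∃ L : List (Equiv.Perm V),
      L.length = m ∧ (∀ σ ∈ L, isRound G σ) ∧ rComp L = π} :=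
    Nat.sInf_mem ⟨L.length, L, rfl, hL₁, hL₂⟩
  obtain ⟨L₀, hlen₀, hround₀, hcomp₀⟩ := hSne
  set m : ℕ := rtP G π with hm
  -- positions of tokens after t rounds
  set P : ℕ → Equiv.Perm V := fun t => rComp (L₀.take t) with hP
  have hP0 : P 0 = 1 := rfl
  have hPm : P m = π := by
    rw [hP]
    simp only
    rw [← hlen₀, List.take_length, hcomp₀]
  have hPsucc : ∀ t (ht : t < m), P (t + 1) = L₀.get ⟨t, by omega⟩ * P t := by
    intro t ht
    have ht' : t < L₀.length := by omega
    rw [hP]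
    simp only
    rw [List.take_succ]
    have : L₀[t]? = some (L₀.get ⟨t, ht'⟩) := List.getElem?_eq_getElem ht'
    rw [this]
    simp only [Option.toList_some]
    rw [rComp_append, rComp_singleton]
  -- for each pair, its first vertex moves at some time
  have hmove : ∀ i : Fin k, ∃ t, P t (a i) ≠ a i := by
    intro i
    refine ⟨m, ?_⟩
    rw [hPm, hπa i]
    exact fun h => hab i i h.symm
  -- data for the injection
  have hstep : ∀ i : Fin k, ∃ t : ℕ, 0 < t ∧ t ≤ m ∧ P t (a i) ∈ V₂ ∧
      (∀ j : Fin k, P t (a j) = P t (a i) → j = i) := by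
    intro i
    have hdp : DecidablePred fun t => P t (a i) ≠ a i := fun t => instDecidableNot
    set t₀ := Nat.find (hmove i) with ht₀
    have hspec : P t₀ (a i) ≠ a i := Nat.find_spec (hmove i)
    have hle : t₀ ≤ m := Nat.find_le (by rw [hPm, hπa i]; exact fun h => hab i i h.symm)
    have hpos : 0 < t₀ := by
      rcases Nat.eq_zero_or_pos t₀ with h0 | h0
      · exfalso; apply hspec; rw [h0, hP0]; rfl
      · exact h0
    have hprev : P (t₀ - 1) (a i) = a i := by
      by_contra h
      exact absurd (Nat.find_min' (hmove i) h) (by omega)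
    have ht₀m : t₀ - 1 < m := by omega
    have hPt₀ : P t₀ = L₀.get ⟨t₀ - 1, by omega⟩ * P (t₀ - 1) := by
      have := hPsucc (t₀ - 1) ht₀m
      rwa [Nat.sub_add_cancel hpos] at this
    set σ := L₀.get ⟨t₀ - 1, by omega⟩ with hσ
    have hPa : P t₀ (a i) = σ (a i) := by rw [hPt₀]; simp [hprev]
    have hmem : P t₀ (a i) ∈ V₂ := by
      rw [hPa]
      have hne : σ (a i) ≠ a i := by rw [← hPa]; exact hspec
      have hadj : G.Adj (a i) (σ (a i)) :=
        (hround₀ σ (List.get_mem L₀ _)).2 (a i) hne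
      exact hN (a i) (haV₁ i) _ hadj
    exact ⟨t₀, hpos, hle, hmem, fun j hj => haa j i ((P t₀).injective hj)⟩
  choose t hpos hle hmem hinj using hstep
  -- the injection into Fin m × V₂
  have hcard : k ≤ m * V₂.card := by
    have hΦ : Function.Injective (fun i : Fin k =>
        ((⟨t i - 1, by have := hpos i; have := hle i; omega⟩ : Fin m),
          (⟨P (t i) (a i), hmem i⟩ : {x // x ∈ V₂}))) := by
      intro i j h
      simp only [Prod.mk.injEq, Fin.mk.injEq, Subtype.mk.injEq] at h
      have hti : t i = t j := by have := hpos i; have := hpos j; omega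
      have h2 := h.2
      rw [← hti] at h2
      exact (hinj i j h2.symm).symm
    have := Fintype.card_le_of_injective _ hΦ
    simpa [Fintype.card_coe] using this
  have hrt : m ≤ rt G := Finset.le_sup (f := rtP G) (Finset.mem_univ π)
  calc k ≤ m * V₂.card := hcard
    _ ≤ rt G * V₂.card := Nat.mul_le_mul_right _ hrt
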